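/- Let C ≤ SL_3(R) be the group of positive diagonal matrices and let P_n be the matrix with rows (1, n, n²/2), (0, 1, n), (0, 0, 1). Then P_n C P_n^{-1} converges, as n → ∞, to the full upper-triangular unipotent group N_1 = { matrices with rows (1, s, t), (0, 1, s), (0, 0, 1) : s, t ∈ R }. -/

import Mathlib

open Filter Topology Matrix

/-- Convergence of a sequence of subsets (subgroups) of a topological space:
(a) every element of `L` is a limit of a sequence with `n`-th term in `H n`;
(b) every subsequential limit of such sequences lies in `L`. -/
def SubgroupConverges {M : Type*} [TopologicalSpace M]
    (H : ℕ → Set M) (L : Set M) : Prop :=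
  (∀ l ∈ L, ∃ h : ℕ → M, (∀ n, h n ∈ H n) ∧ Tendsto h atTop (𝓝 l)) ∧
  (∀ h : ℕ → M, (∀ n, h n ∈ H n) → ∀ φ : ℕ → ℕ, StrictMono φ → ∀ l : M,
    Tendsto (h ∘ φ) atTop (𝓝 l) → l ∈ L)

/-- The positive diagonal Cartan subgroup of SL₃(ℝ), as a set of matrices. -/
def CartanC : Set (Matrix (Fin 3) (Fin 3) ℝ) :=
  {M | ∃ a b : ℝ, 0 < a ∧ 0 < b ∧ M = Matrix.diagonal ![a, b, 1 / (a * b)]}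

noncomputable def P3 (n : ℕ) : Matrix (Fin 3) (Fin 3) ℝ :=
  !![1, (n : ℝ), (n : ℝ) ^ 2 / 2; 0, 1, (n : ℝ); 0, 0, 1]

def groupN1 : Set (Matrix (Fin 3) (Fin 3) ℝ) :=
  {M | ∃ s t : ℝ, M = !![1, s, t; 0, 1, s; 0, 0, 1]}

/-! ### Auxiliary matrix computations -/

lemma diag3 (a b c : ℝ) : Matrix.diagonal ![a,b,c] = !![a,0,0;0,b,0;0,0,c] := by
  ext i j
  fin_cases i <;> fin_cases j <;> simp [Matrix.diagonal_apply] <;> rfl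

lemma P3_inv (n : ℕ) : (P3 n)⁻¹ = !![1, -(n:ℝ), (n:ℝ)^2/2; 0, 1, -(n:ℝ); 0, 0, 1] := by
  apply Matrix.inv_eq_right_inv
  ext i j
  fin_cases i <;> fin_cases j <;>
    simp [P3, Matrix.mul_apply, Fin.sum_univ_three, Matrix.one_apply,
      Matrix.vecHead, Matrix.vecTail] <;> ring

lemma conj3 (n : ℕ) (a b c : ℝ) :
    P3 n * Matrix.diagonal ![a,b,c] * (P3 n)⁻¹ =
      !![a, (n:ℝ)*(b-a), (n:ℝ)^2*(a-2*b+c)/2; 0, b, (n:ℝ)*(c-b); 0, 0, c] := by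
  rw [P3_inv, diag3]
  ext i j
  fin_cases i <;> fin_cases j <;>
    simp [P3, Matrix.mul_apply, Fin.sum_univ_three, Matrix.vecHead, Matrix.vecTail] <;> ring

/-! ### Auxiliary limits -/

lemma limA (k : ℝ) : Tendsto (fun n : ℕ => (n:ℝ) * (Real.exp (k / n) - 1)) atTop (𝓝 k) := by
  have hd : HasDerivAt (fun x : ℝ => Real.exp (k * x)) k 0 := by
    have := ((hasDerivAt_id (0:ℝ)).const_mul k).exp
    simpa using this
  have hs := hasDerivAt_iff_tendsto_slope.1 hd
  have h1 : Tendsto (fun n : ℕ => (1:ℝ) / n) atTop (𝓝[≠] 0) := by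
    apply tendsto_nhdsWithin_of_tendsto_nhds_of_eventually_within
    · exact tendsto_one_div_atTop_nhds_zero_nat
    · filter_upwards [eventually_ge_atTop 1] with n hn
      have : (0:ℝ) < n := by exact_mod_cast hn
      simp only [Set.mem_compl_iff, Set.mem_singleton_iff]
      positivity
  have := hs.comp h1
  apply this.congr'
  filter_upwards [eventually_ge_atTop 1] with n hn
  have hn0 : (n:ℝ) ≠ 0 := by positivity
  simp only [Function.comp, slope_def_field]
  field_simp
  ring_nf
  rw [Real.exp_zero]
  ring

lemma limB (k : ℝ) :
    Tendsto (fun n : ℕ => (n:ℝ)^2 * (Real.exp (k / (n:ℝ)^2) - 1)) atTop (𝓝 k) := by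
  have hsq : Tendsto (fun n : ℕ => n^2) atTop atTop :=
    tendsto_atTop_mono (fun n => Nat.le_self_pow two_ne_zero n) tendsto_id
  have h := (limA k).comp hsq
  apply h.congr
  intro n
  simp only [Function.comp]
  push_cast
  ring_nf

lemma limC (k : ℝ) :
    Tendsto (fun n : ℕ => (n:ℝ) * (Real.exp (k / (n:ℝ)^2) - 1)) atTop (𝓝 0) := by
  have h := tendsto_one_div_atTop_nhds_zero_nat.mul (limB k)
  rw [zero_mul] at h
  apply h.congr'
  filter_upwards [eventually_ge_atTop 1] with n hn
  have hn0 : (n:ℝ) ≠ 0 := by positivity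
  field_simp

lemma limE (k : ℝ) : Tendsto (fun n : ℕ => Real.exp (k / (n:ℝ))) atTop (𝓝 1) := by
  have := Real.continuous_exp.continuousAt.tendsto.comp (tendsto_const_div_atTop_nhds_zero_nat k)
  simpa [Function.comp_def] using this

lemma limE2 (k : ℝ) : Tendsto (fun n : ℕ => Real.exp (k / (n:ℝ)^2)) atTop (𝓝 1) := by
  have hsq : Tendsto (fun n : ℕ => n^2) atTop atTop :=
    tendsto_atTop_mono (fun n => Nat.le_self_pow two_ne_zero n) tendsto_id
  have h := (limE k).comp hsq
  apply h.congr
  intro n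
  simp only [Function.comp]
  push_cast
  ring_nf

lemma ent01 (s d : ℝ) :
    Tendsto (fun n : ℕ => (n:ℝ) * (Real.exp (d/(n:ℝ)^2) - Real.exp (-s/(n:ℝ)))) atTop (𝓝 s) := by
  have h := (limC d).sub (limA (-s))
  rw [zero_sub, neg_neg] at h
  apply h.congr
  intro n
  ring

lemma ent12 (s d : ℝ) :
    Tendsto (fun n : ℕ =>
      (n:ℝ) * (Real.exp (s/(n:ℝ)) * Real.exp (-d/(n:ℝ)^2) - Real.exp (d/(n:ℝ)^2)))
      atTop (𝓝 s) := by
  have h := (((limA s).mul (limE2 (-d))).add (limC (-d))).sub (limC d)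
  rw [show s * 1 + 0 - 0 = s by ring] at h
  apply h.congr
  intro n
  ring

lemma ent02 (s d : ℝ) :
    Tendsto (fun n : ℕ =>
      (n:ℝ)^2 * (Real.exp (-s/(n:ℝ)) - 2*Real.exp (d/(n:ℝ)^2)
        + Real.exp (s/(n:ℝ)) * Real.exp (-d/(n:ℝ)^2)) / 2)
      atTop (𝓝 ((s^2 - 3*d)/2)) := by
  have hu : ∀ n : ℕ, Real.exp (s/(n:ℝ)) = Real.exp (s/2/(n:ℝ)) ^ 2 := by
    intro n; rw [sq, ← Real.exp_add]; congr 1; ring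
  have hv : ∀ n : ℕ, Real.exp (-s/(n:ℝ)) = Real.exp (-s/2/(n:ℝ)) ^ 2 := by
    intro n; rw [sq, ← Real.exp_add]; congr 1; ring
  have huv : ∀ n : ℕ, Real.exp (s/2/(n:ℝ)) * Real.exp (-s/2/(n:ℝ)) = 1 := by
    intro n
    rw [← Real.exp_add, show s/2/(n:ℝ) + -s/2/(n:ℝ) = 0 by ring, Real.exp_zero]
  have h := ((((limA (s/2)).sub (limA (-s/2))).pow 2).add
      ((((limE (s/2)).pow 2).mul (limB (-d))).sub ((limB d).const_mul 2))).div_const 2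
  have h2 : Tendsto (fun n : ℕ =>
      (n:ℝ)^2 * (Real.exp (-s/(n:ℝ)) - 2*Real.exp (d/(n:ℝ)^2)
        + Real.exp (s/(n:ℝ)) * Real.exp (-d/(n:ℝ)^2)) / 2)
      atTop (𝓝 (((s / 2 - -s / 2) ^ 2 + (1 ^ 2 * -d - 2 * d)) / 2)) := by
    refine h.congr fun n => ?_
    rw [hu n, hv n]
    linear_combination (-(n:ℝ)^2) * huv n
  convert h2 using 2
  ring

/-! ### Matrix convergence helpers -/

lemma tendsto_mat3 {f : ℕ → Matrix (Fin 3) (Fin 3) ℝ} {L : Matrix (Fin 3) (Fin 3) ℝ}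
    (h : ∀ i j, Tendsto (fun n => f n i j) atTop (𝓝 (L i j))) :
    Tendsto f atTop (𝓝 L) := by
  apply tendsto_pi_nhds.2
  intro i
  apply tendsto_pi_nhds.2
  intro j
  exact h i j

lemma tendsto_elem {f : ℕ → Matrix (Fin 3) (Fin 3) ℝ} {L : Matrix (Fin 3) (Fin 3) ℝ}
    (h : Tendsto f atTop (𝓝 L)) (i j : Fin 3) :
    Tendsto (fun n => f n i j) atTop (𝓝 (L i j)) :=
  ((continuous_id.matrix_elem i j).continuousAt.tendsto.comp h : _)

lemma cube_eq_one {x : ℝ} (hx : x * x * x = 1) : x = 1 := by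
  have h3 : (x - 1) * (x^2 + x + 1) = 0 := by linear_combination hx
  have h4 : (0:ℝ) < x^2 + x + 1 := by nlinarith [sq_nonneg (x + 1/2)]
  rcases mul_eq_zero.1 h3 with h | h
  · linarith
  · linarith

/-- `P_n C P_n⁻¹` converges to the unipotent group `N₁`. -/
theorem cartan_conj_converges_to_N1 :
    SubgroupConverges
      (fun n => (fun M => P3 n * M * (P3 n)⁻¹) '' CartanC) groupN1 := by
  constructor
  · -- part (a)
    rintro l ⟨s, t, rfl⟩
    set d : ℝ := (s^2 - 2*t)/3 with hd
    refine ⟨fun n => P3 n * Matrix.diagonal ![Real.exp (-s/(n:ℝ)), Real.exp (d/(n:ℝ)^2),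
        1/(Real.exp (-s/(n:ℝ)) * Real.exp (d/(n:ℝ)^2))] * (P3 n)⁻¹,
      fun n => Set.mem_image_of_mem _ ⟨_, _, Real.exp_pos _, Real.exp_pos _, rfl⟩, ?_⟩
    have hc : ∀ n : ℕ, (1/(Real.exp (-s/(n:ℝ)) * Real.exp (d/(n:ℝ)^2)))
        = Real.exp (s/(n:ℝ)) * Real.exp (-d/(n:ℝ)^2) := by
      intro n
      rw [← Real.exp_add, one_div, ← Real.exp_neg, ← Real.exp_add]
      congr 1
      ring
    simp only [conj3, hc]
    apply tendsto_mat3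
    intro i j
    fin_cases i <;> fin_cases j <;>
        simp only [Matrix.cons_val', Matrix.cons_val_zero, Matrix.cons_val_one,
          Matrix.head_cons, Matrix.head_fin_const, Matrix.empty_val',
          Matrix.cons_val_fin_one, Fin.mk_zero, Fin.mk_one]
    · exact limE (-s)
    · exact ent01 s d
    · have h := ent02 s d
      rw [show (s^2 - 3*d)/2 = t by rw [hd]; ring] at h
      exact h
    · exact tendsto_const_nhds
    · exact limE2 d
    · exact ent12 s d
    · exact tendsto_const_nhds
    · exact tendsto_const_nhds
    · have := (limE s).mul (limE2 (-d))
      simpa using this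
  · -- part (b)
    intro h hmem φ hφ l hlim
    have hc : ∀ n : ℕ, ∃ a b : ℝ, 0 < a ∧ 0 < b ∧ h n =
        !![a, (n:ℝ)*(b-a), (n:ℝ)^2*(a-2*b+1/(a*b))/2; 0, b, (n:ℝ)*(1/(a*b)-b); 0, 0, 1/(a*b)] := by
      intro n
      obtain ⟨M, ⟨a, b, ha, hb, rfl⟩, hM⟩ := hmem n
      refine ⟨a, b, ha, hb, ?_⟩
      rw [← hM]
      exact conj3 n a b (1/(a*b))
    choose a b ha hb hmat using hc
    have E : ∀ i j : Fin 3, Tendsto (fun n => h (φ n) i j) atTop (𝓝 (l i j)) :=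
      fun i j => tendsto_elem hlim i j
    have hφR : Tendsto (fun n => ((φ n : ℕ):ℝ)) atTop atTop :=
      tendsto_natCast_atTop_atTop.comp hφ.tendsto_atTop
    have hinv : Tendsto (fun n => ((φ n : ℝ))⁻¹) atTop (𝓝 0) :=
      tendsto_inv_atTop_zero.comp hφR
    have hφpos : ∀ᶠ n in atTop, (φ n : ℝ) ≠ 0 := by
      filter_upwards [eventually_ge_atTop 1] with n hn
      have h1 : (1:ℕ) ≤ φ n := le_trans hn hφ.le_apply
      have : (0:ℝ) < (φ n : ℝ) := by exact_mod_cast h1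
      positivity
    -- entrywise limits
    have e00 : Tendsto (fun n => a (φ n)) atTop (𝓝 (l 0 0)) :=
      (E 0 0).congr (fun n => by rw [hmat (φ n)]; simp [Matrix.vecHead, Matrix.vecTail])
    have e11 : Tendsto (fun n => b (φ n)) atTop (𝓝 (l 1 1)) :=
      (E 1 1).congr (fun n => by rw [hmat (φ n)]; simp [Matrix.vecHead, Matrix.vecTail])
    have e22 : Tendsto (fun n => 1/(a (φ n) * b (φ n))) atTop (𝓝 (l 2 2)) :=
      (E 2 2).congr (fun n => by rw [hmat (φ n)]; simp [Matrix.vecHead, Matrix.vecTail])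
    have e01 : Tendsto (fun n => (φ n : ℝ)*(b (φ n) - a (φ n))) atTop (𝓝 (l 0 1)) :=
      (E 0 1).congr (fun n => by rw [hmat (φ n)]; simp [Matrix.vecHead, Matrix.vecTail])
    have e12 : Tendsto (fun n => (φ n : ℝ)*(1/(a (φ n) * b (φ n)) - b (φ n))) atTop
        (𝓝 (l 1 2)) :=
      (E 1 2).congr (fun n => by rw [hmat (φ n)]; simp [Matrix.vecHead, Matrix.vecTail])
    have e02 : Tendsto (fun n => (φ n : ℝ)^2*(a (φ n) - 2*b (φ n)
        + 1/(a (φ n) * b (φ n)))/2) atTop (𝓝 (l 0 2)) :=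
      (E 0 2).congr (fun n => by rw [hmat (φ n)]; simp [Matrix.vecHead, Matrix.vecTail])
    have z10 : l 1 0 = 0 :=
      tendsto_nhds_unique ((E 1 0).congr (fun n => by rw [hmat (φ n)]; simp [Matrix.vecHead, Matrix.vecTail])) tendsto_const_nhds
    have z20 : l 2 0 = 0 :=
      tendsto_nhds_unique ((E 2 0).congr (fun n => by rw [hmat (φ n)]; simp [Matrix.vecHead, Matrix.vecTail])) tendsto_const_nhds
    have z21 : l 2 1 = 0 :=
      tendsto_nhds_unique ((E 2 1).congr (fun n => by rw [hmat (φ n)]; simp [Matrix.vecHead, Matrix.vecTail])) tendsto_const_nhds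
    -- b - a → 0 and c - b → 0
    have hBA : Tendsto (fun n => b (φ n) - a (φ n)) atTop (𝓝 0) := by
      have h2 := hinv.mul e01
      rw [zero_mul] at h2
      apply h2.congr'
      filter_upwards [hφpos] with n hn
      field_simp
    have hCB : Tendsto (fun n => 1/(a (φ n) * b (φ n)) - b (φ n)) atTop (𝓝 0) := by
      have h2 := hinv.mul e12
      rw [zero_mul] at h2
      apply h2.congr'
      filter_upwards [hφpos] with n hn
      field_simp
    have h11 : l 1 1 = l 0 0 := by
      have h2 := tendsto_nhds_unique e11 ((e00.add hBA).congr (fun n => by ring))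
      simpa using h2
    have h22 : l 2 2 = l 1 1 := by
      have h2 := tendsto_nhds_unique e22 ((e11.add hCB).congr (fun n => by ring))
      simpa using h2
    -- the diagonal limit is 1
    have hprod : Tendsto (fun n => a (φ n) * b (φ n) * (1/(a (φ n) * b (φ n)))) atTop
        (𝓝 (l 0 0 * l 1 1 * l 2 2)) := (e00.mul e11).mul e22
    have hone : l 0 0 * l 1 1 * l 2 2 = 1 := by
      refine tendsto_nhds_unique hprod (tendsto_const_nhds.congr (fun n => ?_))
      have ha0 : a (φ n) ≠ 0 := ne_of_gt (ha (φ n))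
      have hb0 : b (φ n) ≠ 0 := ne_of_gt (hb (φ n))
      field_simp
    have h00 : l 0 0 = 1 := by
      apply cube_eq_one
      rw [h22, h11] at hone
      linarith [hone]
    -- the two off-diagonal limits agree
    have h12eq : l 1 2 = l 0 1 := by
      have hdiff : Tendsto (fun n => (φ n : ℝ)*(1/(a (φ n) * b (φ n)) - b (φ n))
          - (φ n : ℝ)*(b (φ n) - a (φ n))) atTop (𝓝 (l 1 2 - l 0 1)) := e12.sub e01
      have h2 := hinv.mul (e02.const_mul 2)
      rw [zero_mul] at h2
      have h3 : Tendsto (fun n => (φ n : ℝ)*(1/(a (φ n) * b (φ n)) - b (φ n))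
          - (φ n : ℝ)*(b (φ n) - a (φ n))) atTop (𝓝 0) := by
        apply h2.congr'
        filter_upwards [hφpos] with n hn
        field_simp
        have ha0 : a (φ n) ≠ 0 := ne_of_gt (ha (φ n))
        have hb0 : b (φ n) ≠ 0 := ne_of_gt (hb (φ n))
        field_simp
        ring
      have := tendsto_nhds_unique hdiff h3
      linarith
    -- conclude
    refine ⟨l 0 1, l 0 2, ?_⟩
    refine tendsto_nhds_unique hlim (tendsto_mat3 (fun i j => ?_))
    fin_cases i <;> fin_cases j <;>
        simp only [Matrix.cons_val', Matrix.cons_val_zero, Matrix.cons_val_one,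
          Matrix.head_cons, Matrix.head_fin_const, Matrix.empty_val',
          Matrix.cons_val_fin_one, Fin.mk_zero, Fin.mk_one]
    · exact h00 ▸ E 0 0
    · exact E 0 1
    · exact E 0 2
    · exact z10 ▸ E 1 0
    · have h2 : l 1 1 = 1 := by rw [h11, h00]
      exact h2 ▸ E 1 1
    · exact h12eq ▸ E 1 2
    · exact z20 ▸ E 2 0
    · exact z21 ▸ E 2 1
    · have h2 : l 2 2 = 1 := by rw [h22, h11, h00]
      exact h2 ▸ E 2 2
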